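/- Let $\{(\Omega_i,\Sigma_i,\mu_i)\}_{i\in\mathbb{N}}$ be a sequence of measure spaces and suppose $\mathscr{C}$ and $\{\mathscr{C}_n\}_{n\in\mathbb{N}}$ are finite rectangles with the $\mathscr{C}_n$ pairwise disjoint and $\mathscr{C} = \biguplus_{n\in\mathbb{N}} \mathscr{C}_n$. Then $\mathrm{vol}(\mathscr{C}) = \sum_{n\in\mathbb{N}} \mathrm{vol}(\mathscr{C}_n)$ (countable additivity of the volume function on finite rectangles). -/

import Mathlib

set_option linter.unusedSectionVars false
set_option linter.unusedVariables false
set_option maxHeartbeats 1000000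


open MeasureTheory Filter Set
open scoped ENNReal

/-- `HasVol μ C v` says that the rectangle `∏ᵢ Cᵢ` is a *finite rectangle*:
all sides are measurable with finite measure and the infinite product
`∏ᵢ μᵢ(Cᵢ)` converges to the finite value `v ∈ [0,∞)` (its volume). -/
def HasVol {Ω : ℕ → Type*} [∀ i, MeasurableSpace (Ω i)]
    (μ : ∀ i, Measure (Ω i)) (C : ∀ i, Set (Ω i)) (v : ℝ) : Prop :=
  (∀ i, MeasurableSet (C i)) ∧ (∀ i, μ i (C i) ≠ ∞) ∧
    Tendsto (fun m => ∏ i ∈ Finset.range m, (μ i (C i)).toReal) atTop (nhds v)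


namespace Stmt6Aux

variable {Ω : ℕ → Type*} [∀ i, MeasurableSpace (Ω i)]

noncomputable def iter (ν : ∀ i, Measure (Ω i)) : ℕ → ℕ → ((∀ i, Ω i) → ℝ≥0∞) → ((∀ i, Ω i) → ℝ≥0∞)
  | 0, _, f => f
  | (d+1), k, f => fun ω => ∫⁻ t, iter ν d (k+1) f (Function.update ω k t) ∂(ν k)

variable (ν : ∀ i, Measure (Ω i))

lemma iter_zero (k : ℕ) (f : (∀ i, Ω i) → ℝ≥0∞) : iter ν 0 k f = f := rfl

lemma iter_succ (d k : ℕ) (f : (∀ i, Ω i) → ℝ≥0∞) (ω : ∀ i, Ω i) :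
    iter ν (d+1) k f ω = ∫⁻ t, iter ν d (k+1) f (Function.update ω k t) ∂(ν k) := rfl

lemma measurable_iter [∀ i, SFinite (ν i)] (d : ℕ) :
    ∀ (k : ℕ) (f : (∀ i, Ω i) → ℝ≥0∞), Measurable f → Measurable (iter ν d k f) := by
  induction d with
  | zero => intro k f hf; exact hf
  | succ d ih =>
    intro k f hf
    exact ((ih (k+1) f hf).comp (measurable_update' (X := Ω))).lintegral_prod_right'

lemma iter_mono (d : ℕ) : ∀ (k : ℕ) {f g : (∀ i, Ω i) → ℝ≥0∞}, f ≤ g →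
    iter ν d k f ≤ iter ν d k g := by
  induction d with
  | zero => intro k f g h; exact h
  | succ d ih =>
    intro k f g h ω
    exact lintegral_mono fun t => ih (k+1) h _

lemma iter_add [∀ i, SFinite (ν i)] (d : ℕ) : ∀ (k : ℕ) (f g : (∀ i, Ω i) → ℝ≥0∞),
    Measurable f → Measurable g →
    iter ν d k (fun ω => f ω + g ω) = fun ω => iter ν d k f ω + iter ν d k g ω := by
  induction d with
  | zero => intro k f g _ _; rfl
  | succ d ih =>
    intro k f g hf hg
    funext ω
    rw [iter_succ, iter_succ, iter_succ]
    have h1 : Measurable (fun t : Ω k => iter ν d (k+1) f (Function.update ω k t)) :=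
      (measurable_iter ν d (k+1) f hf).comp (measurable_update ω)
    rw [show (fun t => iter ν d (k+1) (fun ω' => f ω' + g ω') (Function.update ω k t))
        = fun t => iter ν d (k+1) f (Function.update ω k t)
          + iter ν d (k+1) g (Function.update ω k t) by
      funext t; rw [ih (k+1) f g hf hg]]
    exact lintegral_add_left h1 _

lemma iter_sum [∀ i, SFinite (ν i)] (d k : ℕ) (s : Finset ℕ) (F : ℕ → (∀ i, Ω i) → ℝ≥0∞)
    (hF : ∀ n, Measurable (F n)) :
    iter ν d k (fun ω => ∑ n ∈ s, F n ω) = fun ω => ∑ n ∈ s, iter ν d k (F n) ω := by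
  classical
  induction s using Finset.induction_on with
  | empty =>
    simp only [Finset.sum_empty]
    induction d generalizing k with
    | zero => rfl
    | succ d ih => funext ω; rw [iter_succ]; simp [ih]
  | insert _ _ hn ih =>
    rename_i a s'
    simp only [Finset.sum_insert hn]
    rw [iter_add ν d k (F a) _ (hF a) (by exact Finset.measurable_sum s' (fun n _ => hF n)), ih]

variable [∀ i, IsProbabilityMeasure (ν i)]

lemma iter_const (d : ℕ) : ∀ (k : ℕ) (c : ℝ≥0∞), iter ν d k (fun _ => c) = fun _ => c := by
  induction d with
  | zero => intro k c; rfl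
  | succ d ih =>
    intro k c
    funext ω
    rw [iter_succ]
    simp [ih (k+1) c]

lemma iter_le_one (d k : ℕ) {f : (∀ i, Ω i) → ℝ≥0∞} (hf : ∀ ω, f ω ≤ 1) (ω : ∀ i, Ω i) :
    iter ν d k f ω ≤ 1 := by
  have := iter_mono ν d k (f := f) (g := fun _ => 1) hf ω
  rwa [iter_const ν d k 1] at this

/-- Functions invariant under updating coordinate `j`. -/
def Inv (f : (∀ i, Ω i) → ℝ≥0∞) (j : ℕ) : Prop :=
  ∀ (ω : ∀ i, Ω i) (t : Ω j), f (Function.update ω j t) = f ω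

lemma iter_succ_of_inv (d : ℕ) : ∀ (k : ℕ) (f : (∀ i, Ω i) → ℝ≥0∞),
    Inv f (k + d) → iter ν (d+1) k f = iter ν d k f := by
  induction d with
  | zero =>
    intro k f hinv
    funext ω
    rw [iter_succ]
    simp only [Nat.add_zero] at hinv
    show ∫⁻ t, f (Function.update ω k t) ∂(ν k) = f ω
    simp [hinv ω]
  | succ d ih =>
    intro k f hinv
    funext ω
    rw [iter_succ, iter_succ]
    congr 1
    funext t
    rw [ih (k+1) f (by rwa [Nat.add_succ, ← Nat.succ_add] at hinv)]

lemma iter_eq_of_inv {c : ℕ} {f : (∀ i, Ω i) → ℝ≥0∞} (hf : ∀ j, c ≤ j → Inv f j)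
    {k d d' : ℕ} (hd : c ≤ k + d) (hd' : c ≤ k + d') : iter ν d k f = iter ν d' k f := by
  have key : ∀ (e : ℕ) (b : ℕ), c ≤ k + b → iter ν (b + e) k f = iter ν b k f := by
    intro e
    induction e with
    | zero => intro b _; rfl
    | succ e ih =>
      intro b hb
      rw [show b + (e+1) = (b+e) + 1 by omega,
        iter_succ_of_inv ν (b+e) k f (hf _ (by omega)), ih b hb]
  rcases le_total d d' with h | h
  · rw [show d' = d + (d' - d) by omega, key (d'-d) d hd]
  · rw [show d = d' + (d - d') by omega, key (d-d') d' hd']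


lemma iter_mul_of_inv (d : ℕ) : ∀ (k : ℕ) (ψ f : (∀ i, Ω i) → ℝ≥0∞),
    (∀ j, k ≤ j → Inv ψ j) → (∀ ω, ψ ω ≠ ∞) → Measurable f →
    iter ν d k (fun ω => ψ ω * f ω) = fun ω => ψ ω * iter ν d k f ω := by
  induction d with
  | zero => intro k ψ f _ _ _; rfl
  | succ d ih =>
    intro k ψ f hψ hψtop hf
    funext ω
    rw [iter_succ]
    have h1 : ∀ t : Ω k, iter ν d (k+1) (fun ω' => ψ ω' * f ω') (Function.update ω k t)
        = ψ ω * iter ν d (k+1) f (Function.update ω k t) := by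
      intro t
      rw [ih (k+1) ψ f (fun j hj => hψ j (by omega)) hψtop hf]
      exact congrArg (fun z => z * iter ν d (k+1) f (Function.update ω k t)) (hψ k le_rfl ω t)
    simp only [h1]
    rw [lintegral_const_mul' _ _ (hψtop ω)]
    rfl

/-- Indicator of a single coordinate. -/
noncomputable def coordInd (E : ∀ i, Set (Ω i)) (i : ℕ) (ω : ∀ i, Ω i) : ℝ≥0∞ :=
  (E i).indicator 1 (ω i)

lemma coordInd_le_one (E : ∀ i, Set (Ω i)) (i : ℕ) (ω : ∀ i, Ω i) : coordInd E i ω ≤ 1 := by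
  unfold coordInd; by_cases h : ω i ∈ E i <;> simp [h]

lemma coordInd_ne_top (E : ∀ i, Set (Ω i)) (i : ℕ) (ω : ∀ i, Ω i) : coordInd E i ω ≠ ∞ :=
  fun h => by simpa [h] using coordInd_le_one E i ω

lemma measurable_coordInd {E : ∀ i, Set (Ω i)} (hE : ∀ i, MeasurableSet (E i)) (i : ℕ) :
    Measurable (coordInd E i) :=
  (measurable_const.indicator (hE i)).comp (measurable_pi_apply i)

/-- Indicator of the "head rectangle" over coordinates in `Finset.Ico k m`. -/
noncomputable def rectInd (E : ∀ i, Set (Ω i)) (k m : ℕ) (ω : ∀ i, Ω i) : ℝ≥0∞ :=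
  ∏ i ∈ Finset.Ico k m, coordInd E i ω

lemma measurable_rectInd {E : ∀ i, Set (Ω i)} (hE : ∀ i, MeasurableSet (E i)) (k m : ℕ) :
    Measurable (rectInd E k m) :=
  Finset.measurable_prod _ (fun i _ => measurable_coordInd hE i)

lemma rectInd_le_one (E : ∀ i, Set (Ω i)) (k m : ℕ) (ω : ∀ i, Ω i) : rectInd E k m ω ≤ 1 :=
  Finset.prod_le_one (fun i _ => zero_le) (fun i _ => coordInd_le_one E i ω)

lemma rectInd_eq_one (E : ∀ i, Set (Ω i)) (k m : ℕ) (ω : ∀ i, Ω i)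
    (h : ∀ i, k ≤ i → i < m → ω i ∈ E i) : rectInd E k m ω = 1 :=
  Finset.prod_eq_one fun i hi => by
    rcases Finset.mem_Ico.mp hi with ⟨h1, h2⟩
    simp [coordInd, h i h1 h2]

lemma rectInd_eq_zero (E : ∀ i, Set (Ω i)) (k m : ℕ) (ω : ∀ i, Ω i)
    (h : ¬ ∀ i, k ≤ i → i < m → ω i ∈ E i) : rectInd E k m ω = 0 := by
  push_neg at h
  rcases h with ⟨i, h1, h2, h3⟩
  exact Finset.prod_eq_zero (Finset.mem_Ico.mpr ⟨h1, h2⟩) (by simp [coordInd, h3])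

lemma rectInd_pos_mem {E : ∀ i, Set (Ω i)} {k m : ℕ} {ω : ∀ i, Ω i}
    (h : rectInd E k m ω ≠ 0) : ∀ i, k ≤ i → i < m → ω i ∈ E i := by
  by_contra hc
  exact h (rectInd_eq_zero E k m ω hc)

lemma inv_coordInd (E : ∀ i, Set (Ω i)) (i j : ℕ) (hij : i ≠ j) : Inv (coordInd E i) j := by
  intro ω t
  unfold coordInd
  rw [Function.update_of_ne hij]

lemma inv_rectInd (E : ∀ i, Set (Ω i)) (k m j : ℕ) (hj : j ∉ Finset.Ico k m) :
    Inv (rectInd E k m) j := by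
  intro ω t
  unfold rectInd
  refine Finset.prod_congr rfl fun i hi => ?_
  exact inv_coordInd E i j (fun h => hj (h ▸ hi)) ω t

/-- The value of the iterated integral on a rectangle indicator. -/
lemma iter_rectInd {E : ∀ i, Set (Ω i)} (hE : ∀ i, MeasurableSet (E i)) (d : ℕ) :
    ∀ (k : ℕ), iter ν d k (rectInd E k (k+d)) = fun _ => ∏ i ∈ Finset.Ico k (k+d), ν i (E i) := by
  induction d with
  | zero => intro k; funext ω; show rectInd E k k ω = _; simp [rectInd]
  | succ d ih =>
    intro k
    funext ω
    rw [iter_succ]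
    have hsplit : rectInd E k (k+(d+1))
        = fun ω' => coordInd E k ω' * rectInd E (k+1) (k+1+d) ω' := by
      funext ω'
      unfold rectInd
      rw [show k + (d+1) = k+1+d by omega]
      exact Finset.prod_eq_prod_Ico_succ_bot (by omega) _
    have h2 : ∀ t : Ω k, iter ν d (k+1) (rectInd E k (k+(d+1))) (Function.update ω k t)
        = coordInd E k (Function.update ω k t) * ∏ i ∈ Finset.Ico (k+1) (k+1+d), ν i (E i) := by
      intro t
      rw [hsplit, iter_mul_of_inv ν d (k+1) _ _
        (fun j hj => inv_coordInd E k j (by omega)) (coordInd_ne_top E k)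
        (measurable_rectInd hE (k+1) (k+1+d)), ih (k+1)]
    simp only [h2]
    have h3 : ∀ t : Ω k, coordInd E k (Function.update ω k t) = (E k).indicator 1 t := by
      intro t; unfold coordInd; rw [Function.update_self]
    simp only [h3]
    rw [lintegral_mul_const' _ _ (by
      exact (ENNReal.prod_lt_top (fun i _ => measure_lt_top _ _)).ne),
      lintegral_indicator_one (hE k)]
    rw [show k + (d+1) = k+1+d by omega,
      Finset.prod_eq_prod_Ico_succ_bot (show k < k+1+d by omega)]


section Key

variable {Ω : ℕ → Type*} [∀ i, MeasurableSpace (Ω i)]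
variable (ν : ∀ i, Measure (Ω i)) [∀ i, IsProbabilityMeasure (ν i)]

/-- head set: constraints on coordinates `< m`. -/
def headSet (E : ∀ i, Set (Ω i)) (m : ℕ) : Set (∀ i, Ω i) := {ω | ∀ i, i < m → ω i ∈ E i}

lemma measurableSet_headSet {E : ∀ i, Set (Ω i)} (hE : ∀ i, MeasurableSet (E i)) (m : ℕ) :
    MeasurableSet (headSet E m) := by
  have : headSet E m = ⋂ (i : ℕ) (_ : i < m), (fun ω : ∀ i, Ω i => ω i) ⁻¹' (E i) := by
    ext ω; simp [headSet]
  rw [this]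
  exact MeasurableSet.iInter fun i => MeasurableSet.iInter fun _ =>
    (measurable_pi_apply i) (hE i)

lemma indicator_headSet (E : ∀ i, Set (Ω i)) (m : ℕ) (ω : ∀ i, Ω i) :
    (headSet E m).indicator (fun _ => (1:ℝ≥0∞)) ω = rectInd E 0 m ω := by
  by_cases h : ω ∈ headSet E m
  · rw [Set.indicator_of_mem h]
    exact (rectInd_eq_one E 0 m ω (fun i _ h2 => h i h2)).symm
  · rw [Set.indicator_of_notMem h]
    exact (rectInd_eq_zero E 0 m ω (fun hc => h (fun i hi => hc i (Nat.zero_le i) hi))).symm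

theorem key_tsum_eq_one
    (C : ∀ i, Set (Ω i)) (hCm : ∀ i, MeasurableSet (C i)) (hC1 : ∀ i, ν i (C i) = 1)
    (D : ℕ → ∀ i, Set (Ω i)) (hDm : ∀ n i, MeasurableSet (D n i))
    (hDC : ∀ n i, D n i ⊆ C i)
    (hdisj : Pairwise (Function.onFun Disjoint (fun n => Set.univ.pi (D n))))
    (hunion : Set.univ.pi C = ⋃ n, Set.univ.pi (D n)) :
    ∑' n, ⨅ m, ∏ i ∈ Finset.range m, ν i (D n i) = 1 := by
  classical
  set p : ℕ → ℕ → ℝ≥0∞ := fun n m => ∏ i ∈ Finset.range m, ν i (D n i) with hp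
  set q : ℕ → ℝ≥0∞ := fun n => ⨅ m, p n m with hq
  have hq_le_p : ∀ n m, q n ≤ p n m := fun n m => iInf_le _ m
  have hq_le_one : ∀ n, q n ≤ 1 := fun n => (hq_le_p n 0).trans_eq (by simp [hp])
  have hq_ne_top : ∀ n, q n ≠ ∞ := fun n => ((hq_le_one n).trans_lt ENNReal.one_lt_top).ne
  -- value of iter on a truncated rectangle
  have hiter_rect : ∀ (n m M : ℕ), m ≤ M → ∀ ω,
      iter ν M 0 (rectInd (D n) 0 m) ω = p n m := by
    intro n m M hmM ω
    set E' : ∀ i, Set (Ω i) := fun i => if i < m then D n i else Set.univ with hE'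
    have hE'm : ∀ i, MeasurableSet (E' i) := by
      intro i; rw [hE']; dsimp only; split
      · exact hDm n i
      · exact MeasurableSet.univ
    have heq : rectInd (D n) 0 m = rectInd E' 0 M := by
      funext ω'
      unfold rectInd
      rw [show Finset.Ico 0 M = Finset.Ico 0 m ∪ Finset.Ico m M by
        rw [Finset.Ico_union_Ico_eq_Ico (Nat.zero_le m) hmM]]
      rw [Finset.prod_union (Finset.Ico_disjoint_Ico_consecutive 0 m M)]
      have h1 : ∏ i ∈ Finset.Ico 0 m, coordInd E' i ω' = ∏ i ∈ Finset.Ico 0 m, coordInd (D n) i ω' := by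
        refine Finset.prod_congr rfl fun i hi => ?_
        unfold coordInd
        rw [hE']; dsimp only; rw [if_pos (Finset.mem_Ico.mp hi).2]
      have h2 : ∏ i ∈ Finset.Ico m M, coordInd E' i ω' = 1 := by
        refine Finset.prod_eq_one fun i hi => ?_
        have him : m ≤ i := (Finset.mem_Ico.mp hi).1
        unfold coordInd
        rw [hE']; dsimp only; rw [if_neg (by omega)]
        simp
      rw [h1, h2, mul_one]
    rw [heq]
    have := iter_rectInd ν hE'm M 0
    rw [show 0 + M = M by omega] at this
    rw [this]
    rw [show Finset.Ico 0 M = Finset.Ico 0 m ∪ Finset.Ico m M by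
        rw [Finset.Ico_union_Ico_eq_Ico (Nat.zero_le m) hmM]]
    rw [Finset.prod_union (Finset.Ico_disjoint_Ico_consecutive 0 m M)]
    have h2 : ∏ i ∈ Finset.Ico m M, ν i (E' i) = 1 := by
      refine Finset.prod_eq_one fun i hi => ?_
      have him : m ≤ i := (Finset.mem_Ico.mp hi).1
      rw [hE']; dsimp only; rw [if_neg (by omega)]
      exact measure_univ
    rw [h2, mul_one, hp]
    dsimp only
    rw [Finset.range_eq_Ico]
    refine Finset.prod_congr rfl fun i hi => ?_
    have him : i < m := (Finset.mem_Ico.mp hi).2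
    rw [hE']; dsimp only; rw [if_pos him]
  have hiterC : ∀ (M : ℕ) (ω : ∀ i, Ω i), iter ν M 0 (rectInd C 0 M) ω = 1 := by
    intro M ω
    have := iter_rectInd ν hCm M 0
    rw [show 0 + M = M by omega] at this
    rw [this]
    exact Finset.prod_eq_one fun i _ => hC1 i
  -- PART A : tsum ≤ 1
  have partA : ∑' n, q n ≤ 1 := by
    -- a common disjointness coordinate for each pair
    have hwit : ∀ n n' : ℕ, ∃ i, n ≠ n' → Disjoint (D n i) (D n' i) := by
      intro n n'
      by_cases h : n = n'
      · exact ⟨0, fun hc => absurd h hc⟩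
      · obtain ⟨i, hi⟩ := Set.disjoint_univ_pi.mp (hdisj h)
        exact ⟨i, fun _ => hi⟩
    choose wit hwit using hwit
    have hsumN : ∀ N : ℕ, ∑ n ∈ Finset.range N, q n ≤ 1 := by
      intro N
      set M : ℕ := ((Finset.range N ×ˢ Finset.range N).sup fun pr => wit pr.1 pr.2) + 1 with hM
      have hwitM : ∀ n n', n < N → n' < N → wit n n' < M := by
        intro n n' hn hn'
        have : wit n n' ≤ (Finset.range N ×ˢ Finset.range N).sup fun pr => wit pr.1 pr.2 :=
          Finset.le_sup (f := fun pr : ℕ × ℕ => wit pr.1 pr.2) (b := (n, n'))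
            (Finset.mem_product.mpr ⟨Finset.mem_range.mpr hn, Finset.mem_range.mpr hn'⟩)
        omega
      have hpoint : ∀ ω, ∑ n ∈ Finset.range N, rectInd (D n) 0 M ω ≤ rectInd C 0 M ω := by
        intro ω
        by_cases hex : ∃ n ∈ Finset.range N, rectInd (D n) 0 M ω ≠ 0
        · obtain ⟨n₀, hn₀N, hn₀⟩ := hex
          have hmem := rectInd_pos_mem hn₀
          have hsum_eq : ∑ n ∈ Finset.range N, rectInd (D n) 0 M ω = rectInd (D n₀) 0 M ω := by
            refine Finset.sum_eq_single n₀ (fun n hn hne => ?_) (fun h => absurd hn₀N h)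
            refine rectInd_eq_zero _ 0 M ω (fun hc => ?_)
            have hiw : wit n n₀ < M := hwitM n n₀ (Finset.mem_range.mp hn) (Finset.mem_range.mp hn₀N)
            have h1 : ω (wit n n₀) ∈ D n (wit n n₀) := hc _ (Nat.zero_le _) hiw
            have h2 : ω (wit n n₀) ∈ D n₀ (wit n n₀) := hmem _ (Nat.zero_le _) hiw
            exact (hwit n n₀ hne).ne_of_mem h1 h2 rfl
          rw [hsum_eq, rectInd_eq_one C 0 M ω (fun i hi him => hDC n₀ i (hmem i hi him))]
          exact rectInd_le_one _ 0 M ω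
        · push_neg at hex
          rw [Finset.sum_eq_zero hex]
          exact zero_le
      -- integrate the pointwise bound
      have hω : Nonempty (∀ i, Ω i) := by
        refine ⟨fun i => Classical.choice ?_⟩
        by_contra h
        rw [not_nonempty_iff] at h
        have h1 := measure_univ (μ := ν i)
        rw [Set.univ_eq_empty_iff.mpr h, measure_empty] at h1
        exact zero_ne_one h1
      obtain ⟨ω⟩ := hω
      have hint := iter_mono ν M 0 (f := fun ω => ∑ n ∈ Finset.range N, rectInd (D n) 0 M ω)
        (g := rectInd C 0 M) hpoint ω
      rw [iter_sum ν M 0 (Finset.range N) _ (fun n => measurable_rectInd (hDm n) 0 M),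
        hiterC M ω] at hint
      refine le_trans (Finset.sum_le_sum fun n hn => ?_) hint
      rw [hiter_rect n M M le_rfl ω]
      exact hq_le_p n M
    rw [ENNReal.tsum_eq_iSup_sum]
    refine iSup_le fun s => ?_
    refine le_trans (Finset.sum_le_sum_of_subset fun x hx => Finset.mem_range.mpr ?_) (hsumN ((s.sup id) + 1))
    exact Nat.lt_succ_of_le (Finset.le_sup (f := id) hx)

  -- PART B : 1 ≤ tsum
  have hΩne : ∀ i, Nonempty (Ω i) := by
    intro i
    by_contra h
    rw [not_nonempty_iff] at h
    have h1 := measure_univ (μ := ν i)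
    rw [Set.univ_eq_empty_iff.mpr h, measure_empty] at h1
    exact zero_ne_one h1
  have partB : (1:ℝ≥0∞) ≤ ∑' n, q n := by
    by_contra hlt
    push_neg at hlt
    set s : ℝ≥0∞ := ∑' n, q n with hs
    have hs_top : s ≠ ∞ := (hlt.trans ENNReal.one_lt_top).ne
    set e : ℝ≥0∞ := (1 - s) / 2 with he
    have h1s_top : (1:ℝ≥0∞) - s ≠ ∞ := (tsub_le_self.trans_lt ENNReal.one_lt_top).ne
    have he0 : e ≠ 0 := by
      rw [he]
      refine fun hc => ?_
      rcases ENNReal.div_eq_zero_iff.mp hc with h | h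
      · exact (tsub_pos_of_lt hlt).ne' h
      · exact ENNReal.ofNat_ne_top h
    have he_top : e ≠ ∞ := by
      rw [he]; exact (ENNReal.div_lt_top h1s_top two_ne_zero).ne
    have hse : s + e + e = 1 := by
      rw [he, add_assoc, ENNReal.add_halves, add_comm, tsub_add_cancel_of_le hlt.le]
    have hsetop : s + e ≠ ∞ := ENNReal.add_ne_top.mpr ⟨hs_top, he_top⟩
    -- antitone partial products
    have hp_anti : ∀ n, Antitone (p n) := by
      intro n a b hab
      rw [hp]; dsimp only
      rw [Finset.range_eq_Ico,
        ← Finset.prod_Ico_consecutive _ (Nat.zero_le a) hab]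
      rw [Finset.range_eq_Ico]
      exact mul_le_of_le_one_right' (Finset.prod_le_one (fun i _ => zero_le)
        (fun i _ => prob_le_one (μ := ν i)))
    -- choose slack levels
    have hchoose : ∀ n, ∃ m, p n m ≤ q n + e * 2⁻¹ ^ (n+1) := by
      intro n
      have hc0 : e * (2⁻¹:ℝ≥0∞) ^ (n+1) ≠ 0 :=
        mul_ne_zero he0 (pow_ne_zero _ (ENNReal.inv_ne_zero.mpr ENNReal.ofNat_ne_top))
      have hlt' : ⨅ m, p n m < q n + e * 2⁻¹ ^ (n+1) :=
        ENNReal.lt_add_right (hq_ne_top n) hc0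
      obtain ⟨m, hm⟩ := iInf_lt_iff.mp hlt'
      exact ⟨m, hm.le⟩
    choose t ht using hchoose
    have hslack : ∑' n, (q n + e * 2⁻¹ ^ (n+1)) ≤ s + e := by
      rw [ENNReal.tsum_add]
      refine add_le_add le_rfl ?_
      rw [ENNReal.tsum_mul_left]
      have hgeo : ∑' n:ℕ, (2⁻¹:ℝ≥0∞) ^ (n+1) = 1 := by
        have h1 : ∀ n:ℕ, (2⁻¹:ℝ≥0∞) ^ (n+1) = 2⁻¹ * 2⁻¹ ^ n := fun n => pow_succ' _ _
        rw [tsum_congr h1, ENNReal.tsum_mul_left, ENNReal.tsum_geometric,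
          ENNReal.one_sub_inv_two]
        exact ENNReal.mul_inv_cancel (ENNReal.inv_ne_zero.mpr ENNReal.ofNat_ne_top)
          (ENNReal.inv_ne_top.mpr two_ne_zero)
      rw [hgeo, mul_one]
    -- the level sequence
    set mseq : ℕ → ℕ := fun N => Nat.rec 0 (fun n ih => max (ih + 1) (t n)) N with hmseq
    have hmseq_succ : ∀ N, mseq (N+1) = max (mseq N + 1) (t N) := fun N => rfl
    have hmono : StrictMono mseq :=
      strictMono_nat_of_lt_succ (fun n => by rw [hmseq_succ]; omega)
    have hmN : ∀ N, N ≤ mseq N := fun N => hmono.le_apply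
    have hmt : ∀ n, t n ≤ mseq (n+1) := fun n => by rw [hmseq_succ]; omega
    -- the decreasing cylinder sets
    set T : ℕ → Set (∀ i, Ω i) := fun N =>
      headSet C (mseq N) \ ⋃ (n : ℕ) (_ : n < N), headSet (D n) (mseq (n+1)) with hT
    have hTmeas : ∀ N, MeasurableSet (T N) := fun N =>
      (measurableSet_headSet hCm _).diff (MeasurableSet.iUnion fun n =>
        MeasurableSet.iUnion fun _ => measurableSet_headSet (hDm n) _)
    have hTsub : ∀ N, T (N+1) ⊆ T N := by
      intro N ω hω
      refine ⟨fun i hi => hω.1 i (hi.trans_le (hmono.monotone (Nat.le_succ N))), fun hc => hω.2 ?_⟩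
      simp only [Set.mem_iUnion] at hc ⊢
      obtain ⟨n, hn, h⟩ := hc
      exact ⟨n, by omega, h⟩
    have hT_eq_coords : ∀ N (ω ω' : ∀ i, Ω i), (∀ i, i < mseq N → ω i = ω' i) →
        ω ∈ T N → ω' ∈ T N := by
      intro N ω ω' hee hω
      refine ⟨fun i hi => (hee i hi) ▸ hω.1 i hi, fun hc => hω.2 ?_⟩
      simp only [Set.mem_iUnion] at hc ⊢
      obtain ⟨n, hn, h⟩ := hc
      refine ⟨n, hn, fun i hi => ?_⟩
      have hi' : i < mseq N := lt_of_lt_of_le hi (hmono.monotone hn)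
      rw [hee i hi']
      exact h i hi
    have hTindm : ∀ N, Measurable ((T N).indicator (fun _ => (1:ℝ≥0∞))) :=
      fun N => measurable_const.indicator (hTmeas N)
    have hTinv : ∀ N j, mseq N ≤ j → Inv ((T N).indicator (fun _ => (1:ℝ≥0∞))) j := by
      intro N j hj ω u
      have h1 : ∀ i, i < mseq N → Function.update ω j u i = ω i := fun i hi =>
        Function.update_of_ne (by omega) _ _
      by_cases hω : ω ∈ T N
      · rw [Set.indicator_of_mem hω,
          Set.indicator_of_mem (hT_eq_coords N ω _ (fun i hi => (h1 i hi).symm) hω)]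
      · rw [Set.indicator_of_notMem hω,
          Set.indicator_of_notMem (fun hc => hω (hT_eq_coords N _ ω h1 hc))]
    -- the lower bound on the leftover content
    have hbound : ∀ N (ω : ∀ i, Ω i),
        e ≤ iter ν (mseq N) 0 ((T N).indicator (fun _ => (1:ℝ≥0∞))) ω := by
      intro N ω
      have hpoint : ∀ ω' : ∀ i, Ω i, rectInd C 0 (mseq N) ω' ≤
          (T N).indicator (fun _ => (1:ℝ≥0∞)) ω'
          + ∑ n ∈ Finset.range N, rectInd (D n) 0 (mseq (n+1)) ω' := by
        intro ω'
        by_cases hc : ω' ∈ headSet C (mseq N)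
        · have hle1 : rectInd C 0 (mseq N) ω' ≤ 1 := rectInd_le_one _ _ _ _
          by_cases hT' : ω' ∈ T N
          · refine hle1.trans ?_
            rw [Set.indicator_of_mem hT']
            exact le_add_right le_rfl
          · have hmem : ω' ∈ ⋃ (n:ℕ) (_ : n < N), headSet (D n) (mseq (n+1)) := by
              by_contra hcc
              exact hT' ⟨hc, hcc⟩
            simp only [Set.mem_iUnion] at hmem
            obtain ⟨n, hn, hmem⟩ := hmem
            have h1 : rectInd (D n) 0 (mseq (n+1)) ω' = 1 :=
              rectInd_eq_one _ _ _ _ (fun i _ hi => hmem i hi)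
            refine hle1.trans (le_add_left ?_)
            calc (1:ℝ≥0∞) = rectInd (D n) 0 (mseq (n+1)) ω' := h1.symm
              _ ≤ ∑ n ∈ Finset.range N, rectInd (D n) 0 (mseq (n+1)) ω' :=
                Finset.single_le_sum (f := fun n' => rectInd (D n') 0 (mseq (n'+1)) ω')
                  (fun i _ => zero_le) (Finset.mem_range.mpr hn)
        · rw [← indicator_headSet, Set.indicator_of_notMem hc]
          exact zero_le
      have hint := iter_mono ν (mseq N) 0 hpoint ω
      rw [hiterC (mseq N) ω] at hint
      rw [iter_add ν (mseq N) 0 _ _ (hTindm N)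
        (Finset.measurable_sum _ (fun n _ => measurable_rectInd (hDm n) 0 _))] at hint
      rw [iter_sum ν (mseq N) 0 (Finset.range N) _
        (fun n => measurable_rectInd (hDm n) 0 _)] at hint
      have h2 : ∑ n ∈ Finset.range N, iter ν (mseq N) 0 (rectInd (D n) 0 (mseq (n+1))) ω
          ≤ s + e := by
        refine le_trans (Finset.sum_le_sum fun n hn => ?_)
          (le_trans (ENNReal.sum_le_tsum _) hslack)
        rw [hiter_rect n (mseq (n+1)) (mseq N)
          (hmono.monotone (Finset.mem_range.mp hn)) ω]
        exact le_trans (hp_anti n (hmt n)) (ht n)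
      have h3 : (1:ℝ≥0∞) ≤ iter ν (mseq N) 0 ((T N).indicator (fun _ => (1:ℝ≥0∞))) ω
          + (s + e) := le_trans hint (add_le_add le_rfl h2)
      have h4 : e + (s + e) ≤ iter ν (mseq N) 0 ((T N).indicator (fun _ => (1:ℝ≥0∞))) ω
          + (s + e) := by
        rw [show e + (s + e) = s + e + e by ring, hse]
        exact h3
      exact (ENNReal.add_le_add_iff_right hsetop).mp h4
    -- martingale functions
    set f : ℕ → ℕ → (∀ i, Ω i) → ℝ≥0∞ :=
      fun N k => iter ν (mseq N - k) k ((T N).indicator (fun _ => (1:ℝ≥0∞))) with hf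
    have hfmeas : ∀ N k, Measurable (f N k) := fun N k => measurable_iter ν _ _ _ (hTindm N)
    have hindle1 : ∀ N (ω' : ∀ i, Ω i), (T N).indicator (fun _ => (1:ℝ≥0∞)) ω' ≤ 1 := by
      intro N ω'
      by_cases h : ω' ∈ T N <;> simp [h]
    have hfle1 : ∀ N k (ω : ∀ i, Ω i), f N k ω ≤ 1 :=
      fun N k ω => iter_le_one ν _ _ (hindle1 N) ω
    have hfanti : ∀ k (ω : ∀ i, Ω i), Antitone (fun N => f N k ω) := by
      intro k ω
      refine antitone_nat_of_succ_le fun N => ?_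
      simp only [hf]
      have h1 : iter ν (mseq (N+1) - k) k ((T (N+1)).indicator (fun _ => (1:ℝ≥0∞))) ω
          ≤ iter ν (mseq (N+1) - k) k ((T N).indicator (fun _ => (1:ℝ≥0∞))) ω := by
        refine iter_mono ν _ _ (fun ω' => ?_) ω
        exact Set.indicator_le_indicator_of_subset (hTsub N) (fun _ => zero_le) ω'
      refine h1.trans (le_of_eq ?_)
      have hmle : mseq N ≤ mseq (N+1) := hmono.monotone (Nat.le_succ N)
      have heq := iter_eq_of_inv ν (c := mseq N)
        (f := (T N).indicator fun _ => (1:ℝ≥0∞)) (fun j hj => hTinv N j hj)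
        (k := k) (d := mseq (N+1) - k) (d' := mseq N - k) (by omega) (by omega)
      exact congrFun heq ω
    have hfpeel : ∀ N k (ω : ∀ i, Ω i),
        f N k ω = ∫⁻ u, f N (k+1) (Function.update ω k u) ∂ν k := by
      intro N k ω
      rcases lt_or_ge k (mseq N) with h | h
      · simp only [hf]
        rw [show mseq N - k = (mseq N - (k+1)) + 1 by omega]
        rfl
      · simp only [hf]
        rw [show mseq N - k = 0 by omega, show mseq N - (k+1) = 0 by omega]
        rw [iter_zero, iter_zero]
        have h1 : ∀ u, (T N).indicator (fun _ => (1:ℝ≥0∞)) (Function.update ω k u)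
            = (T N).indicator (fun _ => (1:ℝ≥0∞)) ω := fun u => hTinv N k h ω u
        simp only [h1]
        rw [lintegral_const, measure_univ, mul_one]
    have hf0 : ∀ N (ω : ∀ i, Ω i), e ≤ f N 0 ω := by
      intro N ω
      simp only [hf]
      rw [Nat.sub_zero]
      exact hbound N ω
    -- recursion
    set P : ℕ → (∀ i, Ω i) → Prop := fun k ω => 0 < ⨅ N, f N k ω with hPdef
    have hstep : ∀ k (ω : ∀ i, Ω i), ∃ ω', (P k ω → P (k+1) ω') ∧ ∀ j, j ≠ k → ω' j = ω j := by
      intro k ω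
      by_cases hPk : P k ω
      · simp only [hPdef] at hPk
        have hgmeas : ∀ N, Measurable (fun u : Ω k => f N (k+1) (Function.update ω k u)) :=
          fun N => (hfmeas N (k+1)).comp (measurable_update ω)
        have hganti : Antitone (fun N => fun u : Ω k => f N (k+1) (Function.update ω k u)) :=
          fun N N' h u => hfanti (k+1) _ h
        have hgint : ∀ N, ⨅ N', f N' k ω ≤ ∫⁻ u, f N (k+1) (Function.update ω k u) ∂ν k := by
          intro N
          rw [← hfpeel N k ω]
          exact iInf_le _ N
        have hgtop : ∫⁻ u, f 0 (k+1) (Function.update ω k u) ∂ν k ≠ ∞ := by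
          refine ne_of_lt (lt_of_le_of_lt (lintegral_mono fun u => hfle1 0 (k+1) _) ?_)
          rw [lintegral_one, measure_univ]
          exact ENNReal.one_lt_top
        have hkey : 0 < ∫⁻ u, ⨅ N, f N (k+1) (Function.update ω k u) ∂ν k := by
          rw [lintegral_iInf hgmeas hganti hgtop]
          exact lt_of_lt_of_le hPk (le_iInf hgint)
        have hex : ∃ u, 0 < ⨅ N, f N (k+1) (Function.update ω k u) := by
          by_contra hcc
          push_neg at hcc
          have hz : ∀ u, ⨅ N, f N (k+1) (Function.update ω k u) = 0 :=
            fun u => le_antisymm (hcc u) (zero_le)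
          rw [lintegral_congr hz, lintegral_zero] at hkey
          exact lt_irrefl 0 hkey
        obtain ⟨u, hu⟩ := hex
        refine ⟨Function.update ω k u, fun _ => ?_, fun j hj => Function.update_of_ne hj _ _⟩
        rw [hPdef]
        exact hu
      · exact ⟨ω, fun h => absurd h hPk, fun _ _ => rfl⟩
    choose nxt hnxt1 hnxt2 using hstep
    have hω0 : ∀ i, Ω i := fun i => Classical.choice (hΩne i)
    set seq : ℕ → ∀ i, Ω i := fun k => Nat.rec hω0 (fun k ih => nxt k ih) k with hseqdef
    have hseq_succ : ∀ k, seq (k+1) = nxt k (seq k) := fun k => rfl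
    have hPseq : ∀ k, P k (seq k) := by
      intro k
      induction k with
      | zero =>
        simp only [hPdef]
        exact lt_of_lt_of_le (pos_iff_ne_zero.mpr he0) (le_iInf fun N => hf0 N _)
      | succ k ih =>
        rw [hseq_succ]
        exact hnxt1 k (seq k) ih
    have hstab : ∀ j K, j < K → seq K j = seq (j+1) j := by
      intro j K hK
      induction K with
      | zero => omega
      | succ K ih =>
        rcases Nat.lt_or_ge j K with h | h
        · rw [hseq_succ, hnxt2 K (seq K) j (by omega), ih h]
        · have hjK : j = K := by omega
          subst hjK
          rfl
    set ωlim : ∀ i, Ω i := fun i => seq (i+1) i with hωlimdef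
    have hωlimT : ∀ N, ωlim ∈ T N := by
      intro N
      have h1 : 0 < f N (mseq N) (seq (mseq N)) := by
        have := hPseq (mseq N)
        simp only [hPdef] at this
        exact lt_of_lt_of_le this (iInf_le _ N)
      have h2 : seq (mseq N) ∈ T N := by
        by_contra hc
        simp only [hf] at h1
        rw [Nat.sub_self, iter_zero, Set.indicator_of_notMem hc] at h1
        exact lt_irrefl 0 h1
      refine hT_eq_coords N (seq (mseq N)) ωlim (fun i hi => ?_) h2
      rw [hωlimdef]
      exact hstab i (mseq N) hi
    -- contradiction with the covering
    have hmemC : ωlim ∈ Set.univ.pi C := by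
      intro i _
      exact (hωlimT (i+1)).1 i (lt_of_lt_of_le (Nat.lt_succ_self i) (hmN (i+1)))
    rw [hunion] at hmemC
    obtain ⟨n, hn⟩ := Set.mem_iUnion.mp hmemC
    refine (hωlimT (n+1)).2 ?_
    simp only [Set.mem_iUnion]
    exact ⟨n, Nat.lt_succ_self n, fun i hi => hn i (Set.mem_univ i)⟩
  exact le_antisymm partA partB


end Key

end Stmt6Aux


open Stmt6Aux in
theorem stmt_6 {Ω : ℕ → Type*} [∀ i, MeasurableSpace (Ω i)] (μ : ∀ i, Measure (Ω i))
    (C : ∀ i, Set (Ω i)) (v : ℝ) (hC : HasVol μ C v)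
    (D : ℕ → ∀ i, Set (Ω i)) (w : ℕ → ℝ) (hD : ∀ n, HasVol μ (D n) (w n))
    (hdisj : Pairwise (Function.onFun Disjoint (fun n => Set.univ.pi (D n))))
    (hunion : Set.univ.pi C = ⋃ n, Set.univ.pi (D n)) :
    HasSum w v := by
  classical
  obtain ⟨hCmeas, hCfin, hCtend⟩ := hC
  have hDmeas : ∀ n i, MeasurableSet (D n i) := fun n => (hD n).1
  have hDfin : ∀ n i, μ i (D n i) ≠ ∞ := fun n => (hD n).2.1
  have hDtend : ∀ n, Tendsto (fun m => ∏ i ∈ Finset.range m, (μ i (D n i)).toReal)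
      atTop (nhds (w n)) := fun n => (hD n).2.2
  -- rectangles that are empty have zero volume
  have hempty : ∀ n, Set.univ.pi (D n) = ∅ → w n = 0 := by
    intro n hn
    obtain ⟨i0, hi0⟩ := Set.univ_pi_eq_empty_iff.mp hn
    have hev : (fun m => ∏ i ∈ Finset.range m, (μ i (D n i)).toReal)
        =ᶠ[atTop] (fun _ => (0:ℝ)) := by
      filter_upwards [eventually_ge_atTop (i0+1)] with m hm
      exact Finset.prod_eq_zero (i := i0) (Finset.mem_range.mpr (by omega))
        (by rw [hi0, measure_empty]; simp)
    exact tendsto_nhds_unique ((hDtend n).congr' hev) tendsto_const_nhds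
  have hDsubpiC : ∀ n, Set.univ.pi (D n) ⊆ Set.univ.pi C := by
    intro n
    rw [hunion]
    exact Set.subset_iUnion (fun n => Set.univ.pi (D n)) n
  by_cases hv : v = 0
  · -- volume-zero case : all pieces must have zero volume
    have hw : ∀ n, w n = 0 := by
      intro n
      rcases Set.eq_empty_or_nonempty (Set.univ.pi (D n)) with hn | hn
      · exact hempty n hn
      · -- nonempty : D n i ⊆ C i for all i
        have hDC : ∀ i, D n i ⊆ C i := by
          intro i x hx
          obtain ⟨ω, hω⟩ := hn
          have hupd : Function.update ω i x ∈ Set.univ.pi (D n) := by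
            intro j _
            by_cases hj : j = i
            · subst hj; rw [Function.update_self]; exact hx
            · rw [Function.update_of_ne hj]; exact hω j (Set.mem_univ j)
          have := hDsubpiC n hupd i (Set.mem_univ i)
          rwa [Function.update_self] at this
        have h1 : w n ≤ v := by
          refine le_of_tendsto_of_tendsto' (hDtend n) hCtend fun m => ?_
          refine Finset.prod_le_prod (fun i _ => ENNReal.toReal_nonneg) fun i _ => ?_
          exact ENNReal.toReal_mono (hCfin i) (measure_mono (hDC i))
        have h2 : 0 ≤ w n := by
          refine ge_of_tendsto' (hDtend n) fun m => ?_
          exact Finset.prod_nonneg fun i _ => ENNReal.toReal_nonneg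
        rw [hv] at h1
        exact le_antisymm h1 h2
    have : w = fun _ => (0:ℝ) := funext hw
    rw [this, hv]
    exact hasSum_zero
  · -- main case : 0 < v
    have hv0 : 0 ≤ v := by
      refine ge_of_tendsto' hCtend fun m => ?_
      exact Finset.prod_nonneg fun i _ => ENNReal.toReal_nonneg
    have hvpos : 0 < v := lt_of_le_of_ne hv0 (Ne.symm hv)
    have hCpos : ∀ i, μ i (C i) ≠ 0 := by
      intro i hi
      refine hv ?_
      have hev : (fun m => ∏ j ∈ Finset.range m, (μ j (C j)).toReal)
          =ᶠ[atTop] (fun _ => (0:ℝ)) := by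
        filter_upwards [eventually_ge_atTop (i+1)] with m hm
        exact Finset.prod_eq_zero (i := i) (Finset.mem_range.mpr (by omega))
          (by rw [hi]; simp)
      exact tendsto_nhds_unique (hCtend.congr' hev) tendsto_const_nhds
    -- normalized measures
    set ν : ∀ i, Measure (Ω i) := fun i => (μ i (C i))⁻¹ • (μ i).restrict (C i) with hν
    have hνprob : ∀ i, IsProbabilityMeasure (ν i) := by
      intro i
      constructor
      rw [hν]
      simp only [Measure.smul_apply, smul_eq_mul]
      rw [Measure.restrict_apply MeasurableSet.univ, Set.univ_inter]
      exact ENNReal.inv_mul_cancel (hCpos i) (hCfin i)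
    haveI := hνprob
    have hνapp : ∀ i (S : Set (Ω i)), MeasurableSet S →
        ν i S = (μ i (C i))⁻¹ * μ i (S ∩ C i) := by
      intro i S hS
      rw [hν]
      simp only [Measure.smul_apply, smul_eq_mul]
      rw [Measure.restrict_apply hS]
    have hνC1 : ∀ i, ν i (C i) = 1 := by
      intro i
      rw [hνapp i (C i) (hCmeas i), Set.inter_self]
      exact ENNReal.inv_mul_cancel (hCpos i) (hCfin i)
    -- intersected rectangles
    set D' : ℕ → ∀ i, Set (Ω i) := fun n i => D n i ∩ C i with hD'
    have hD'meas : ∀ n i, MeasurableSet (D' n i) := fun n i => (hDmeas n i).inter (hCmeas i)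
    have hD'sub : ∀ n i, D' n i ⊆ C i := fun n i => Set.inter_subset_right
    have hpiD' : ∀ n, Set.univ.pi (D' n) = Set.univ.pi (D n) := by
      intro n
      rw [hD']
      rw [Set.pi_inter_distrib]
      exact Set.inter_eq_left.mpr (hDsubpiC n)
    have hdisj' : Pairwise (Function.onFun Disjoint (fun n => Set.univ.pi (D' n))) := by
      intro n n' hne
      show Disjoint (Set.univ.pi (D' n)) (Set.univ.pi (D' n'))
      rw [hpiD', hpiD']
      exact hdisj hne
    have hunion' : Set.univ.pi C = ⋃ n, Set.univ.pi (D' n) := by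
      rw [hunion]
      exact (iUnion_congr hpiD').symm
    -- apply the key lemma
    have hkey := key_tsum_eq_one ν C hCmeas hνC1 D' hD'meas hD'sub hdisj' hunion'
    set q : ℕ → ℝ≥0∞ := fun n => ⨅ m, ∏ i ∈ Finset.range m, ν i (D' n i) with hqdef
    have hq_le_one : ∀ n, q n ≤ 1 := by
      intro n
      refine (iInf_le _ 0).trans_eq ?_
      simp
    have hq_ne_top : ∀ n, q n ≠ ∞ := fun n => ((hq_le_one n).trans_lt ENNReal.one_lt_top).ne
    -- identify the toReal of q n
    have hqval : ∀ n, (q n).toReal = w n / v := by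
      intro n
      have htend1 : Tendsto (fun m => ∏ i ∈ Finset.range m, ν i (D' n i)) atTop (nhds (q n)) := by
        rw [hqdef]
        refine tendsto_atTop_iInf ?_
        intro a b hab
        show (∏ i ∈ Finset.range b, ν i (D' n i)) ≤ ∏ i ∈ Finset.range a, ν i (D' n i)
        rw [Finset.range_eq_Ico, ← Finset.prod_Ico_consecutive _ (Nat.zero_le a) hab]
        rw [Finset.range_eq_Ico]
        exact mul_le_of_le_one_right' (Finset.prod_le_one (fun i _ => zero_le)
          (fun i _ => prob_le_one (μ := ν i)))
      have htend2 : Tendsto (fun m => (∏ i ∈ Finset.range m, ν i (D' n i)).toReal)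
          atTop (nhds ((q n).toReal)) :=
        (ENNReal.tendsto_toReal (hq_ne_top n)).comp htend1
      rcases Set.eq_empty_or_nonempty (Set.univ.pi (D n)) with hn | hn
      · -- empty : both sides are 0
        obtain ⟨i0, hi0⟩ := Set.univ_pi_eq_empty_iff.mp hn
        have hq0 : q n = 0 := by
          refine le_antisymm ?_ (zero_le)
          refine (iInf_le _ (i0+1)).trans_eq ?_
          refine Finset.prod_eq_zero (i := i0) (Finset.mem_range.mpr (by omega)) ?_
          rw [hνapp i0 (D' n i0) (hD'meas n i0)]
          rw [hD']
          simp [hi0]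
        rw [hq0, hempty n hn]
        simp
      · -- nonempty : D n i ⊆ C i
        have hDC : ∀ i, D n i ⊆ C i := by
          intro i x hx
          obtain ⟨ω, hω⟩ := hn
          have hupd : Function.update ω i x ∈ Set.univ.pi (D n) := by
            intro j _
            by_cases hj : j = i
            · subst hj; rw [Function.update_self]; exact hx
            · rw [Function.update_of_ne hj]; exact hω j (Set.mem_univ j)
          have := hDsubpiC n hupd i (Set.mem_univ i)
          rwa [Function.update_self] at this
        have hD'eq : ∀ i, D' n i = D n i := fun i => Set.inter_eq_left.mpr (hDC i)
        have hfactor : ∀ i, (ν i (D' n i)).toReal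
            = (μ i (D n i)).toReal / (μ i (C i)).toReal := by
          intro i
          rw [hνapp i (D' n i) (hD'meas n i), hD'eq, Set.inter_eq_left.mpr (hDC i)]
          rw [ENNReal.toReal_mul, ENNReal.toReal_inv]
          rw [div_eq_inv_mul]
        have htend3 : Tendsto (fun m => (∏ i ∈ Finset.range m, ν i (D' n i)).toReal)
            atTop (nhds (w n / v)) := by
          have heq : ∀ m, (∏ i ∈ Finset.range m, ν i (D' n i)).toReal
              = (∏ i ∈ Finset.range m, (μ i (D n i)).toReal)
                / (∏ i ∈ Finset.range m, (μ i (C i)).toReal) := by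
            intro m
            rw [ENNReal.toReal_prod]
            rw [← Finset.prod_div_distrib]
            exact Finset.prod_congr rfl fun i _ => hfactor i
          simp only [heq]
          exact Tendsto.div (hDtend n) hCtend hv
        exact tendsto_nhds_unique htend2 htend3
    -- conclude
    have hsum_ne_top : ∑' n, q n ≠ ∞ := by
      rw [hkey]
      exact ENNReal.one_ne_top
    have hHS : HasSum (fun n => (q n).toReal) 1 := by
      have h1 := ENNReal.hasSum_toReal hsum_ne_top
      have h2 : ∑' n, (q n).toReal = 1 := by
        rw [← ENNReal.tsum_toReal_eq hq_ne_top, hkey]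
        exact ENNReal.toReal_one
      rwa [h2] at h1
    have hfin : HasSum (fun n => v * (q n).toReal) (v * 1) := hHS.mul_left v
    have hweq : (fun n => v * (q n).toReal) = w := by
      funext n
      rw [hqval n]
      field_simp
    rw [hweq, mul_one] at hfin
    exact hfin
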